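/- Let v_2 be an additive valuation over a finite set M of goods and write μ_2 = μ_2(3, M). Suppose that v_{2j} < (7/8)μ_2 for every single good j ∈ M, and that (A_1, A_2, A_3) is a partition of M with v_2(A_2) < (7/8)μ_2 and v_2(A_3) < (7/8)μ_2. Then max{ μ_2(2, A_1 ∪ A_2), μ_2(2, A_1 ∪ A_3) } ≥ (7/8)μ_2, i.e., at least one of the two sets A_1 ∪ A_2 and A_1 ∪ A_3 admits a partition into two bundles each of v_2-value at least (7/8)μ_2. -/
import Mathlib

/-- `P` is a partition of the finite set `S` of goods into `n`
(possibly empty) pairwise disjoint bundles. -/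
def IsPartition {ι : Type*} [DecidableEq ι] (n : ℕ) (S : Finset ι)
    (P : Fin n → Finset ι) : Prop :=
  (∀ i j : Fin n, i ≠ j → Disjoint (P i) (P j)) ∧ Finset.univ.biUnion P = S

/-- The `n`-maximin share of an agent with additive valuation given by item
values `v` with respect to the finite set `S` of goods:
`μ(n, S) = max over partitions of S into n bundles of the minimum bundle value`. -/
noncomputable def mms {ι : Type*} [DecidableEq ι] (n : ℕ) (S : Finset ι)
    (v : ι → ℝ) : ℝ :=
  sSup {x : ℝ | ∃ P : Fin n → Finset ι,
    IsPartition n S P ∧ x = ⨅ j : Fin n, (P j).sum v}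

section Aux

variable {ι : Type*} [DecidableEq ι]

lemma partition_subset {n : ℕ} {S : Finset ι} {P : Fin n → Finset ι}
    (hP : IsPartition n S P) (i : Fin n) : P i ⊆ S := by
  rw [← hP.2]
  exact Finset.subset_biUnion_of_mem P (Finset.mem_univ i)

lemma mmsSet_bddAbove (n : ℕ) (hn : 0 < n) (S : Finset ι) (v : ι → ℝ) :
    BddAbove {x : ℝ | ∃ P : Fin n → Finset ι,
      IsPartition n S P ∧ x = ⨅ j : Fin n, (P j).sum v} := by
  refine ⟨S.sum (fun j => |v j|), ?_⟩
  rintro x ⟨P, hP, rfl⟩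
  have h1 : (⨅ j : Fin n, (P j).sum v) ≤ (P ⟨0, hn⟩).sum v :=
    ciInf_le (Set.Finite.bddBelow (Set.finite_range _)) _
  refine h1.trans ?_
  calc (P ⟨0, hn⟩).sum v ≤ (P ⟨0, hn⟩).sum (fun j => |v j|) :=
        Finset.sum_le_sum (fun j _ => le_abs_self _)
    _ ≤ S.sum (fun j => |v j|) :=
        Finset.sum_le_sum_of_subset_of_nonneg (partition_subset hP _)
          (fun j _ _ => abs_nonneg _)

lemma le_mms {n : ℕ} (hn : 0 < n) (S : Finset ι) (v : ι → ℝ)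
    (P : Fin n → Finset ι) (hP : IsPartition n S P) {c : ℝ}
    (hc : ∀ j, c ≤ (P j).sum v) : c ≤ mms n S v := by
  haveI : Nonempty (Fin n) := ⟨⟨0, hn⟩⟩
  have hx : (⨅ j : Fin n, (P j).sum v) ∈
      {x : ℝ | ∃ P : Fin n → Finset ι,
        IsPartition n S P ∧ x = ⨅ j : Fin n, (P j).sum v} := ⟨P, hP, rfl⟩
  exact le_trans (le_ciInf hc) (le_csSup (mmsSet_bddAbove n hn S v) hx)

lemma mms2_ge {S P : Finset ι} (v : ι → ℝ) (hP : P ⊆ S) {c : ℝ}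
    (h1 : c ≤ P.sum v) (h2 : c ≤ S.sum v - P.sum v) : c ≤ mms 2 S v := by
  refine le_mms (by norm_num) S v ![P, S \ P] ⟨?_, ?_⟩ ?_
  · intro i j hij
    fin_cases i <;> fin_cases j <;> simp_all [Finset.disjoint_sdiff, Finset.sdiff_disjoint]
  · ext x
    simp only [Finset.mem_biUnion, Finset.mem_univ, true_and]
    constructor
    · rintro ⟨i, hi⟩
      fin_cases i <;> simp_all [Finset.mem_sdiff]
      · exact hP hi
    · intro hx
      by_cases hxP : x ∈ P
      · exact ⟨0, by simpa using hxP⟩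
      · exact ⟨1, by simp [Finset.mem_sdiff, hx, hxP]⟩
  · intro j
    fin_cases j
    · simpa using h1
    · simpa [Finset.sum_sdiff_eq_sub hP] using h2

lemma exists_mms3_partition (S : Finset ι) (v : ι → ℝ) :
    ∃ P : Fin 3 → Finset ι, IsPartition 3 S P ∧ ∀ i, mms 3 S v ≤ (P i).sum v := by
  set E := {x : ℝ | ∃ P : Fin 3 → Finset ι,
    IsPartition 3 S P ∧ x = ⨅ j : Fin 3, (P j).sum v} with hE
  have hne : E.Nonempty := by
    refine ⟨⨅ j : Fin 3, ((![S, ∅, ∅] : Fin 3 → Finset ι) j).sum v, ![S, ∅, ∅], ⟨?_, ?_⟩, rfl⟩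
    · intro i j hij
      fin_cases i <;> fin_cases j <;> simp_all
    · ext x
      simp only [Finset.mem_biUnion, Finset.mem_univ, true_and]
      constructor
      · rintro ⟨i, hi⟩
        fin_cases i <;> simp_all
      · intro hx
        exact ⟨0, by simpa using hx⟩
  have hfin : E.Finite := by
    have h1 : {P : Fin 3 → Finset ι | IsPartition 3 S P}.Finite := by
      refine Set.Finite.subset (Set.Finite.pi (fun _ : Fin 3 => S.powerset.finite_toSet)) ?_
      intro P hP
      simp only [Set.mem_pi, Set.mem_univ, forall_true_left, Finset.mem_coe,
        Finset.mem_powerset]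
      exact fun i => partition_subset hP i
    have h2 : E = (fun P : Fin 3 → Finset ι => ⨅ j : Fin 3, (P j).sum v) ''
        {P : Fin 3 → Finset ι | IsPartition 3 S P} := by
      ext x
      constructor
      · rintro ⟨P, hP, rfl⟩; exact ⟨P, hP, rfl⟩
      · rintro ⟨P, hP, rfl⟩; exact ⟨P, hP, rfl⟩
    rw [h2]
    exact h1.image _
  have hmem : mms 3 S v ∈ E := Set.Nonempty.csSup_mem hne hfin
  obtain ⟨P, hP, heq⟩ := hmem
  refine ⟨P, hP, fun i => ?_⟩
  rw [heq]
  exact ciInf_le (Set.Finite.bddBelow (Set.finite_range _)) i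

lemma sum_parts (M : Finset ι) (v : ι → ℝ) (B : Fin 3 → Finset ι)
    (hd : ∀ i j : Fin 3, i ≠ j → Disjoint (B i) (B j))
    (hU : Finset.univ.biUnion B = M) (X : Finset ι) (hX : X ⊆ M) :
    X.sum v = ∑ i : Fin 3, ((B i) ∩ X).sum v := by
  have hXeq : X = Finset.univ.biUnion (fun i => B i ∩ X) := by
    ext x
    simp only [Finset.mem_biUnion, Finset.mem_inter, Finset.mem_univ, true_and]
    constructor
    · intro hx
      have hxM : x ∈ M := hX hx
      rw [← hU] at hxM
      simp only [Finset.mem_biUnion, Finset.mem_univ, true_and] at hxM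
      obtain ⟨i, hi⟩ := hxM
      exact ⟨i, hi, hx⟩
    · rintro ⟨i, _, hx⟩
      exact hx
  conv_lhs => rw [hXeq]
  exact Finset.sum_biUnion (fun i _ j _ hij =>
    Disjoint.mono Finset.inter_subset_left Finset.inter_subset_left (hd i j hij))

lemma core (M : Finset ι) (v : ι → ℝ) (μ : ℝ)
    (X T Bi : Finset ι) (hBiM : Bi ⊆ M) (hX : X ⊆ M) (hT : T ⊆ M \ X)
    (hTB : Disjoint T Bi)
    (hBival : μ ≤ Bi.sum v)
    (hrest : 2 * μ ≤ M.sum v - Bi.sum v)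
    (h1 : (Bi ∩ X).sum v ≤ μ / 8 + T.sum v)
    (h2 : T.sum v ≤ 9 / 8 * μ - X.sum v + (Bi ∩ X).sum v) :
    7 / 8 * μ ≤ mms 2 (M \ X) v := by
  have hPsub : (Bi \ X) ∪ T ⊆ M \ X :=
    Finset.union_subset (Finset.sdiff_subset_sdiff hBiM (le_refl X)) hT
  have hdisj : Disjoint (Bi \ X) T := Disjoint.mono_left Finset.sdiff_subset hTB.symm
  have hBiX : (Bi \ X).sum v = Bi.sum v - (Bi ∩ X).sum v := by
    rw [← Finset.sdiff_inter_self_left Bi X]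
    exact Finset.sum_sdiff_eq_sub Finset.inter_subset_left
  have hPsum : ((Bi \ X) ∪ T).sum v = Bi.sum v - (Bi ∩ X).sum v + T.sum v := by
    rw [Finset.sum_union hdisj, hBiX]
  have hMX : (M \ X).sum v = M.sum v - X.sum v := Finset.sum_sdiff_eq_sub hX
  refine mms2_ge v hPsub ?_ ?_
  · rw [hPsum]; linarith
  · rw [hPsum, hMX]; linarith

lemma fin3_cases (i : Fin 3) : i = 0 ∨ i = 1 ∨ i = 2 := by
  fin_cases i <;> decide

lemma exists_min3 (f : Fin 3 → ℝ) : ∃ a : Fin 3, ∀ i, f a ≤ f i := by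
  have key : ∀ a : Fin 3, f a ≤ f 0 → f a ≤ f 1 → f a ≤ f 2 → ∀ i, f a ≤ f i := by
    intro a h0 h1 h2 i
    rcases fin3_cases i with rfl | rfl | rfl <;> assumption
  rcases le_total (f 0) (f 1) with h01 | h01 <;>
    rcases le_total (f 0) (f 2) with h02 | h02 <;>
    rcases le_total (f 1) (f 2) with h12 | h12
  · exact ⟨0, key 0 le_rfl h01 h02⟩
  · exact ⟨0, key 0 le_rfl h01 h02⟩
  · exact ⟨2, key 2 h02 (le_trans h02 h01) le_rfl⟩
  · exact ⟨2, key 2 h02 h12 le_rfl⟩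
  · exact ⟨1, key 1 h01 le_rfl (le_trans h01 h02)⟩
  · exact ⟨1, key 1 h01 le_rfl (le_trans h01 h02)⟩
  · exact ⟨1, key 1 h01 le_rfl h12⟩
  · exact ⟨2, key 2 h02 h12 le_rfl⟩

lemma other_two (a : Fin 3) : ∃ b c : Fin 3, a ≠ b ∧ a ≠ c ∧ b ≠ c ∧
    ∀ g : Fin 3 → ℝ, g a + g b + g c = g 0 + g 1 + g 2 := by
  rcases fin3_cases a with rfl | rfl | rfl
  · exact ⟨1, 2, by decide, by decide, by decide, fun g => by ring⟩
  · exact ⟨0, 2, by decide, by decide, by decide, fun g => by ring⟩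
  · exact ⟨0, 1, by decide, by decide, by decide, fun g => by ring⟩

lemma main_core (M : Finset ι) (v : ι → ℝ) (μ : ℝ) (hμ : 0 < μ)
    (B : Fin 3 → Finset ι)
    (hBd : ∀ i j : Fin 3, i ≠ j → Disjoint (B i) (B j))
    (hBU : Finset.univ.biUnion B = M)
    (hBv : ∀ i, μ ≤ (B i).sum v)
    (hvpos : ∀ j ∈ M, 0 ≤ v j)
    (X Y : Finset ι) (hX : X ⊆ M) (hY : Y ⊆ M) (hXY : Disjoint X Y)
    (hXv : X.sum v < 7 / 8 * μ) (hYv : Y.sum v < 7 / 8 * μ) :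
    7 / 8 * μ ≤ mms 2 (M \ X) v ∨ 7 / 8 * μ ≤ mms 2 (M \ Y) v := by
  set l : Fin 3 → ℝ := fun i => ((B i) ∩ X).sum v with hl
  set m : Fin 3 → ℝ := fun i => ((B i) ∩ Y).sum v with hm
  have hBsub : ∀ i, B i ⊆ M := fun i => by
    rw [← hBU]; exact Finset.subset_biUnion_of_mem B (Finset.mem_univ i)
  have hBM : ∀ i : Fin 3, B i ∩ M = B i := fun i => Finset.inter_eq_left.mpr (hBsub i)
  have hMsum : M.sum v = (B 0).sum v + (B 1).sum v + (B 2).sum v := by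
    have h := sum_parts M v B hBd hBU M (le_refl M)
    rw [Fin.sum_univ_three, hBM 0, hBM 1, hBM 2] at h
    exact h
  have hlsum : l 0 + l 1 + l 2 = X.sum v := by
    have h := sum_parts M v B hBd hBU X hX
    rw [Fin.sum_univ_three] at h
    simp only [hl]
    rw [h]
  have hmsum : m 0 + m 1 + m 2 = Y.sum v := by
    have h := sum_parts M v B hBd hBU Y hY
    rw [Fin.sum_univ_three] at h
    simp only [hm]
    rw [h]
  have hlnn : ∀ i, 0 ≤ l i := fun i =>
    Finset.sum_nonneg (fun j hj => hvpos j (hBsub i (Finset.mem_inter.mp hj).1))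
  have hmnn : ∀ i, 0 ≤ m i := fun i =>
    Finset.sum_nonneg (fun j hj => hvpos j (hBsub i (Finset.mem_inter.mp hj).1))
  have hrest : ∀ a : Fin 3, 2 * μ ≤ M.sum v - (B a).sum v := by
    intro a
    have h0 := hBv 0
    have h1 := hBv 1
    have h2 := hBv 2
    have hba := hBv a
    rcases fin3_cases a with rfl | rfl | rfl <;> rw [hMsum] <;> linarith
  have hYMX : Y ⊆ M \ X := Finset.subset_sdiff.mpr ⟨hY, hXY.symm⟩
  have hXMY : X ⊆ M \ Y := Finset.subset_sdiff.mpr ⟨hX, hXY⟩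
  by_cases hc1 : ∃ a, l a ≤ μ / 8
  · obtain ⟨a, ha⟩ := hc1
    left
    refine core M v μ X ∅ (B a) (hBsub a) hX (by simp) (by simp) (hBv a) (hrest a) ?_ ?_
    · show l a ≤ μ / 8 + (∅ : Finset ι).sum v
      simp only [Finset.sum_empty, add_zero]
      exact ha
    · show (∅ : Finset ι).sum v ≤ 9 / 8 * μ - X.sum v + l a
      simp only [Finset.sum_empty]
      have := hlnn a
      linarith
  by_cases hc2 : ∃ a, m a ≤ μ / 8
  · obtain ⟨a, ha⟩ := hc2
    right
    refine core M v μ Y ∅ (B a) (hBsub a) hY (by simp) (by simp) (hBv a) (hrest a) ?_ ?_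
    · show m a ≤ μ / 8 + (∅ : Finset ι).sum v
      simp only [Finset.sum_empty, add_zero]
      exact ha
    · show (∅ : Finset ι).sum v ≤ 9 / 8 * μ - Y.sum v + m a
      simp only [Finset.sum_empty]
      have := hmnn a
      linarith
  push_neg at hc1 hc2
  -- hc1 : ∀ a, μ / 8 < l a ; hc2 : ∀ a, μ / 8 < m a
  obtain ⟨a, hamin⟩ := exists_min3 l
  obtain ⟨b0, c0, hab0, hac0, hbc0, hsum0⟩ := other_two a
  obtain ⟨b, c, hab, hac, hbc, hmbc, habcsum⟩ :
      ∃ b c : Fin 3, a ≠ b ∧ a ≠ c ∧ b ≠ c ∧ m b ≤ m c ∧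
        ∀ g : Fin 3 → ℝ, g a + g b + g c = g 0 + g 1 + g 2 := by
    rcases le_total (m b0) (m c0) with h | h
    · exact ⟨b0, c0, hab0, hac0, hbc0, h, hsum0⟩
    · exact ⟨c0, b0, hac0, hab0, hbc0.symm, h, fun g => by rw [← hsum0 g]; ring⟩
  by_cases hsub1 : l a - μ / 8 ≤ m b
  · -- use S1 = M \ X with T = B b ∩ Y
    left
    refine core M v μ X (B b ∩ Y) (B a) (hBsub a) hX
      (Finset.inter_subset_right.trans hYMX)
      (Disjoint.mono_left Finset.inter_subset_left (hBd b a (Ne.symm hab))) (hBv a)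
      (hrest a) ?_ ?_
    · show l a ≤ μ / 8 + m b
      linarith
    · show m b ≤ 9 / 8 * μ - X.sum v + l a
      have h1 : m a + m b + m c = Y.sum v := by rw [habcsum m, hmsum]
      have h2 : μ / 8 < m a := hc2 a
      have h3 : μ / 8 < l a := hc1 a
      linarith
  · -- m b < l a - μ/8
    push_neg at hsub1
    obtain ⟨a', ha'min⟩ := exists_min3 m
    obtain ⟨b0', c0', hab0', hac0', hbc0', hsum0'⟩ := other_two a'
    obtain ⟨b', c', hab', hac', hbc', hlbc', habcsum'⟩ :
        ∃ b' c' : Fin 3, a' ≠ b' ∧ a' ≠ c' ∧ b' ≠ c' ∧ l b' ≤ l c' ∧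
          ∀ g : Fin 3 → ℝ, g a' + g b' + g c' = g 0 + g 1 + g 2 := by
      rcases le_total (l b0') (l c0') with h | h
      · exact ⟨b0', c0', hab0', hac0', hbc0', h, hsum0'⟩
      · exact ⟨c0', b0', hac0', hab0', hbc0'.symm, h, fun g => by rw [← hsum0' g]; ring⟩
    by_cases hsub2 : m a' - μ / 8 ≤ l b'
    · right
      refine core M v μ Y (B b' ∩ X) (B a') (hBsub a') hY
        (Finset.inter_subset_right.trans hXMY)
        (Disjoint.mono_left Finset.inter_subset_left (hBd b' a' (Ne.symm hab'))) (hBv a')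
        (hrest a') ?_ ?_
      · show m a' ≤ μ / 8 + l b'
        linarith
      · show l b' ≤ 9 / 8 * μ - Y.sum v + m a'
        have h1 : l a' + l b' + l c' = X.sum v := by rw [habcsum' l, hlsum]
        have h2 : μ / 8 < l a' := hc1 a'
        have h3 : μ / 8 < m a' := hc2 a'
        linarith
    · push_neg at hsub2
      exfalso
      have h1 : m a' ≤ m b := ha'min b
      have h2 : l a ≤ l b' := hamin b'
      linarith

end Aux

theorem mms_two_of_union_ge {ι : Type*} [DecidableEq ι]
    (M : Finset ι) (v : ι → ℝ) (hv : ∀ j ∈ M, 0 ≤ v j)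
    (hitems : ∀ j ∈ M, v j < 7 / 8 * mms 3 M v)
    (A : Fin 3 → Finset ι) (hA : IsPartition 3 M A)
    (hA2 : (A 1).sum v < 7 / 8 * mms 3 M v)
    (hA3 : (A 2).sum v < 7 / 8 * mms 3 M v) :
    7 / 8 * mms 3 M v ≤ max (mms 2 (A 0 ∪ A 1) v) (mms 2 (A 0 ∪ A 2) v) := by
  obtain ⟨hAd, hAU⟩ := hA
  have hAsub : ∀ i, A i ⊆ M := fun i => by
    rw [← hAU]; exact Finset.subset_biUnion_of_mem A (Finset.mem_univ i)
  have h01 : A 0 ∪ A 1 = M \ A 2 := by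
    ext x
    simp only [Finset.mem_union, Finset.mem_sdiff]
    constructor
    · rintro (hx | hx)
      · exact ⟨hAsub 0 hx, fun h2 => (Finset.disjoint_left.mp (hAd 0 2 (by decide))) hx h2⟩
      · exact ⟨hAsub 1 hx, fun h2 => (Finset.disjoint_left.mp (hAd 1 2 (by decide))) hx h2⟩
    · rintro ⟨hxM, hx2⟩
      rw [← hAU] at hxM
      simp only [Finset.mem_biUnion, Finset.mem_univ, true_and] at hxM
      obtain ⟨i, hi⟩ := hxM
      fin_cases i
      · exact Or.inl hi
      · exact Or.inr hi
      · exact absurd hi hx2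
  have h02 : A 0 ∪ A 2 = M \ A 1 := by
    ext x
    simp only [Finset.mem_union, Finset.mem_sdiff]
    constructor
    · rintro (hx | hx)
      · exact ⟨hAsub 0 hx, fun h1 => (Finset.disjoint_left.mp (hAd 0 1 (by decide))) hx h1⟩
      · exact ⟨hAsub 2 hx, fun h1 => (Finset.disjoint_left.mp (hAd 2 1 (by decide))) hx h1⟩
    · rintro ⟨hxM, hx1⟩
      rw [← hAU] at hxM
      simp only [Finset.mem_biUnion, Finset.mem_univ, true_and] at hxM
      obtain ⟨i, hi⟩ := hxM
      fin_cases i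
      · exact Or.inl hi
      · exact absurd hi hx1
      · exact Or.inr hi
  rcases le_or_gt (mms 3 M v) 0 with hμ | hμ
  · refine le_trans ?_ (le_max_left _ _)
    have hnn : 0 ≤ (A 0 ∪ A 1).sum v :=
      Finset.sum_nonneg (fun j hj => hv j (by
        rcases Finset.mem_union.mp hj with h | h
        · exact hAsub 0 h
        · exact hAsub 1 h))
    refine mms2_ge v (le_refl (A 0 ∪ A 1)) ?_ ?_
    · linarith
    · simp only [sub_self]
      linarith
  · obtain ⟨B, hBpart, hBv⟩ := exists_mms3_partition M v
    have hmain := main_core M v (mms 3 M v) hμ B hBpart.1 hBpart.2 hBv hv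
      (A 2) (A 1) (hAsub 2) (hAsub 1) (hAd 2 1 (by decide)) hA3 hA2
    rcases hmain with h | h
    · rw [← h01] at h
      exact le_trans h (le_max_left _ _)
    · rw [← h02] at h
      exact le_trans h (le_max_right _ _)
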